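/- Let m ≥ 2, n ≥ 1, A be integers with A + 2 - m ≤ 0, and let α₁,…,αₙ be integers with A+2-m ≤ αᵢ ≤ A+1 for all i. Let p ∈ {0,…,n-1} and q ∈ {A+2-m,…,A+1} be the unique integers determined by Euclidean division so that the sequence β with β₁ = … = β_p = A+1, β_{p+1} = q, β_{p+2} = … = β_n = A+2-m satisfies Σβᵢ = Σαᵢ. Then Σᵢ max(αᵢ,0) ≤ Σᵢ max(βᵢ,0) and Σᵢ max(αᵢ-1,0) ≤ Σᵢ max(βᵢ-1,0). -/
import Mathlib

open Finset

lemma sum_beta {n : ℕ} (p : ℕ) (hpn : p + 1 ≤ n) (U q L : ℤ)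
    (β : Fin n → ℤ)
    (hβ : ∀ i : Fin n, β i = if (i : ℕ) < p then U else if (i : ℕ) = p then q else L)
    (f : ℤ → ℤ) :
    ∑ i, f (β i) = p * f U + f q + ((n - (p + 1) : ℕ) : ℤ) * f L := by
  have h1 : ∑ i : Fin n, f (β i)
      = ∑ i : Fin n, (fun k : ℕ => f (if k < p then U else if k = p then q else L)) (i : ℕ) := by
    apply Finset.sum_congr rfl
    intro i _
    rw [hβ i]
  rw [h1, Fin.sum_univ_eq_sum_range (fun k : ℕ => f (if k < p then U else if k = p then q else L)) n]
  rw [← Finset.sum_range_add_sum_Ico _ hpn]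
  rw [Finset.sum_range_succ]
  have h2 : ∑ i ∈ Finset.range p, f (if i < p then U else if i = p then q else L)
      = p * f U := by
    rw [Finset.sum_congr rfl (fun i hi => by
      rw [if_pos (Finset.mem_range.mp hi)])]
    simp [mul_comm]
  have h3 : f (if p < p then U else if p = p then q else L) = f q := by simp
  have h4 : ∑ i ∈ Finset.Ico (p + 1) n, f (if i < p then U else if i = p then q else L)
      = ((n - (p + 1) : ℕ) : ℤ) * f L := by
    rw [Finset.sum_congr rfl (fun i hi => by
      have := (Finset.mem_Ico.mp hi).1
      rw [if_neg (by omega), if_neg (by omega)])]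
    simp [Nat.card_Ico, mul_comm]
  rw [h2, h3, h4]

lemma key {n : ℕ} (L c U q : ℤ) (hLc : L ≤ c)
    (α : Fin n → ℤ) (hlo : ∀ i, L ≤ α i) (hhi : ∀ i, α i ≤ U)
    (p : ℕ) (hpn : p + 1 ≤ n) (hqL : L ≤ q)
    (hS : ∑ i, α i = p * U + q + ((n : ℤ) - 1 - p) * L) :
    ∑ i, max (α i - c) 0 ≤ p * max (U - c) 0 + max (q - c) 0 := by
  classical
  set T := Finset.univ.filter (fun i : Fin n => c + 1 ≤ α i) with hT
  have hsplit : ∑ i, max (α i - c) 0 = ∑ i ∈ T, (α i - c) := by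
    rw [← Finset.sum_filter_add_sum_filter_not Finset.univ (fun i => c + 1 ≤ α i)
      (fun i => max (α i - c) 0)]
    have h1 : ∑ i ∈ T, max (α i - c) 0 = ∑ i ∈ T, (α i - c) := by
      apply Finset.sum_congr rfl
      intro i hi
      simp only [hT, Finset.mem_filter] at hi
      omega
    have h2 : ∑ i ∈ Finset.univ.filter (fun i : Fin n => ¬ c + 1 ≤ α i),
        max (α i - c) 0 = 0 := by
      apply Finset.sum_eq_zero
      intro i hi
      simp only [Finset.mem_filter] at hi
      omega
    rw [h2, h1, add_zero]
  rw [hsplit]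
  by_cases hk : T.card ≤ p
  · have hbound : ∑ i ∈ T, (α i - c) ≤ ∑ i ∈ T, max (U - c) 0 := by
      apply Finset.sum_le_sum
      intro i _
      have := hhi i
      omega
    rw [Finset.sum_const, nsmul_eq_mul] at hbound
    have h1 : (T.card : ℤ) * max (U - c) 0 ≤ (p : ℤ) * max (U - c) 0 := by
      apply mul_le_mul_of_nonneg_right _ (le_max_right _ _)
      exact_mod_cast hk
    have h2 : (0 : ℤ) ≤ max (q - c) 0 := le_max_right _ _
    linarith
  · push_neg at hk
    set k := T.card with hkdef
    have hkn : k ≤ n := by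
      calc k ≤ Finset.univ.card := Finset.card_le_card (Finset.filter_subset _ _)
      _ = n := by simp
    have hcomp : ∑ i ∈ T, α i + ∑ i ∈ Tᶜ, α i = ∑ i, α i := by
      rw [Finset.sum_add_sum_compl]
    have hcompl_card : (Tᶜ : Finset (Fin n)).card = n - k := by
      rw [Finset.card_compl]
      simp [hkdef]
    have hcompl_lb : ((n - k : ℕ) : ℤ) * L ≤ ∑ i ∈ Tᶜ, α i := by
      have : ∑ i ∈ Tᶜ, L ≤ ∑ i ∈ Tᶜ, α i := Finset.sum_le_sum (fun i _ => hlo i)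
      rwa [Finset.sum_const, nsmul_eq_mul, hcompl_card] at this
    have hsumT : ∑ i ∈ T, (α i - c) = ∑ i ∈ T, α i - k * c := by
      rw [Finset.sum_sub_distrib, Finset.sum_const, nsmul_eq_mul]
    rw [hsumT]
    have hub1 : (U - c) ≤ max (U - c) 0 := le_max_left _ _
    have hub2 : (q - c) ≤ max (q - c) 0 := le_max_left _ _
    have hcast : ((n - k : ℕ) : ℤ) = (n : ℤ) - k := by omega
    have hp1 : ((p : ℤ)) * (U - c) ≤ (p : ℤ) * max (U - c) 0 :=
      mul_le_mul_of_nonneg_left hub1 (by positivity)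
    have hprod : ((k : ℤ) - 1 - p) * (L - c) ≤ 0 := by
      apply mul_nonpos_of_nonneg_of_nonpos
      · have : (p : ℤ) < k := by exact_mod_cast hk
        omega
      · omega
    rw [hcast] at hcompl_lb
    nlinarith [hcomp, hcompl_lb, hS, hprod, hp1, hub2]

theorem worst_case (m n : ℕ) (A : ℤ) (hm : 2 ≤ m) (hn : 1 ≤ n)
    (hAm : A + 2 - (m : ℤ) ≤ 0)
    (α : Fin n → ℤ) (hlo : ∀ i, A + 2 - (m : ℤ) ≤ α i) (hhi : ∀ i, α i ≤ A + 1)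
    (p : ℕ) (hp : p ≤ n - 1) (q : ℤ) (hq1 : A + 2 - (m : ℤ) ≤ q) (hq2 : q ≤ A + 1)
    (β : Fin n → ℤ)
    (hβ : ∀ i : Fin n, β i =
      if (i : ℕ) < p then A + 1 else if (i : ℕ) = p then q else A + 2 - (m : ℤ))
    (hsum : ∑ i, β i = ∑ i, α i) :
    (∑ i, max (α i) 0 ≤ ∑ i, max (β i) 0) ∧
    (∑ i, max (α i - 1) 0 ≤ ∑ i, max (β i - 1) 0) := by
  have hpn : p + 1 ≤ n := by omega
  set L : ℤ := A + 2 - (m : ℤ) with hLdef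
  set U : ℤ := A + 1 with hUdef
  have hid : ∑ i, β i = p * U + q + ((n - (p + 1) : ℕ) : ℤ) * L :=
    sum_beta p hpn U q L β hβ id
  have hS : ∑ i, α i = p * U + q + ((n : ℤ) - 1 - p) * L := by
    rw [← hsum, hid]
    have : ((n - (p + 1) : ℕ) : ℤ) = (n : ℤ) - 1 - p := by omega
    rw [this]
  constructor
  · have hβsum : ∑ i, max (β i) 0 = p * max U 0 + max q 0
        + ((n - (p + 1) : ℕ) : ℤ) * max L 0 :=
      sum_beta p hpn U q L β hβ (fun x => max x 0)
    have hL0 : max L 0 = 0 := by omega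
    have hkey := key L 0 U q (by omega) α hlo hhi p hpn hq1 hS
    simp only [sub_zero] at hkey
    rw [hβsum, hL0, mul_zero, add_zero]
    exact hkey
  · have hβsum : ∑ i, max (β i - 1) 0 = p * max (U - 1) 0 + max (q - 1) 0
        + ((n - (p + 1) : ℕ) : ℤ) * max (L - 1) 0 :=
      sum_beta p hpn U q L β hβ (fun x => max (x - 1) 0)
    have hL0 : max (L - 1) 0 = 0 := by omega
    have hkey := key L 1 U q (by omega) α hlo hhi p hpn hq1 hS
    rw [hβsum, hL0, mul_zero, add_zero]
    exact hkey
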